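/- In U(gl(2|1))[[t]]: [H₂, T] = −(1/4)(T³ − T'), [H₂, T'] = −(1/4)(T'³ − T), [H₃, T] = (1/4)(T³ − T'), and [H₃, T'] = (1/4)(T'³ − T). -/

import Mathlib

noncomputable section

namespace SuperJordanian

open scoped BigOperators

/-- The generalized binomial coefficient `C(1/2, n)`. -/
def cHalf (n : ℕ) : ℂ :=
  (∏ i ∈ Finset.range n, ((1 : ℂ) / 2 - (i : ℂ))) / (n.factorial : ℂ)

/-- Parity for `gl(2|1)`: `p(i,j) = 1` iff exactly one of `i`, `j` equals the third index. -/
def par (i j : Fin 3) : ℕ :=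
  if (i = 2 ∧ j ≠ 2) ∨ (i ≠ 2 ∧ j = 2) then 1 else 0

/-- The generator `e_{ij}` in the free algebra. -/
def gen (i j : Fin 3) : FreeAlgebra ℂ (Fin 3 × Fin 3) := FreeAlgebra.ι ℂ (i, j)

/-- Defining relations of the enveloping algebra `U(gl(2|1))`:
`e_{ij} e_{kl} - (-1)^{p(i,j)p(k,l)} e_{kl} e_{ij}
  = δ_{jk} e_{il} - (-1)^{p(i,j)p(k,l)} δ_{li} e_{kj}`. -/
inductive Rel : FreeAlgebra ℂ (Fin 3 × Fin 3) → FreeAlgebra ℂ (Fin 3 × Fin 3) → Prop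
  | mk (i j k l : Fin 3) :
      Rel (gen i j * gen k l - ((-1 : ℂ) ^ (par i j * par k l)) • (gen k l * gen i j))
        ((if j = k then gen i l else 0)
          - ((-1 : ℂ) ^ (par i j * par k l)) • (if l = i then gen k j else 0))

/-- The enveloping algebra `U = U(gl(2|1))`. -/
abbrev U : Type := RingQuot Rel

/-- The image of `e_{ij}` in `U`. -/
def e (i j : Fin 3) : U := RingQuot.mkAlgHom ℂ Rel (gen i j)

/-- The formal power series ring `U[[t]]`. -/
abbrev V : Type := PowerSeries U

/-- The central formal variable `t`. -/
def tv : V := PowerSeries.X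

/-- The inclusion `U → U[[t]]` as constant power series. -/
def C : U →+* V := PowerSeries.C

def e₁ : U := e 0 1
def f₁ : U := e 1 0
def h₁ : U := e 0 0 - e 1 1
def e₂ : U := e 1 2
def f₂ : U := e 2 1
def h₂ : U := e 1 1 + e 2 2
def e₃ : U := e 0 2
def f₃ : U := e 2 0
def h₃ : U := h₁ + h₂

/-- `s = Σ_{n ≥ 0} C(1/2, n) t^{2n} e₁^{2n}`, so that `s² = 1 + t² e₁²`. -/
def s : V := PowerSeries.mk fun m => if m % 2 = 0 then cHalf (m / 2) • (e₁ ^ m) else 0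

def T : V := tv * C e₁ + s
def T' : V := -(tv * C e₁) + s
def H₁ : V := s * C h₁
def F₁ : V := C f₁ - ((1 : ℂ) / 4) • (tv ^ 2 * C (e₁ * (h₁ ^ 2 - 1)))
def H₂ : V := C h₂ - ((1 : ℂ) / 2) • (tv ^ 2 * C (e₁ ^ 2 * h₁))
def E₂ : V := C e₂ - ((1 : ℂ) / 4) • (tv ^ 2 * C (e₁ * e₃ * (2 * h₁ + 1)))
def F₂ : V := C f₂
def H₃ : V := C h₃ + ((1 : ℂ) / 2) • (tv ^ 2 * C (e₁ ^ 2 * h₁))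
def E₃ : V := C e₃
def F₃ : V := C f₃ + ((1 : ℂ) / 4) • (tv ^ 2 * C (e₁ * f₂ * (2 * h₁ + 1)))

/-- Commutator `[a, b] = ab - ba`. -/
def br (a b : V) : V := a * b - b * a

/-- Anticommutator `{a, b} = ab + ba`. -/
def ac (a b : V) : V := a * b + b * a


/-! ### Auxiliary lemmas -/

open PowerSeries

section ComplexSeries

lemma smeval_descPochhammer_complex (r : ℂ) (n : ℕ) :
    Polynomial.smeval (descPochhammer ℤ n) r = ∏ i ∈ Finset.range n, (r - i) := by
  induction n with
  | zero => simp [descPochhammer_zero, Polynomial.smeval_one]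
  | succ n ih =>
    rw [descPochhammer_succ_right, Polynomial.smeval_mul, ih, Finset.prod_range_succ]
    congr 1
    simp [Polynomial.smeval_sub, Polynomial.smeval_X, Polynomial.smeval_natCast]

lemma cHalf_eq_choose (n : ℕ) : cHalf n = Ring.choose ((1:ℂ)/2) n := by
  have h := Ring.descPochhammer_eq_factorial_smul_choose ((1:ℂ)/2) n
  rw [smeval_descPochhammer_complex] at h
  have hf : (n.factorial : ℂ) ≠ 0 := Nat.cast_ne_zero.mpr n.factorial_ne_zero
  rw [cHalf, h, nsmul_eq_mul]
  field_simp

lemma cHalf_conv (m : ℕ) :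
    ∑ ij ∈ Finset.HasAntidiagonal.antidiagonal m, cHalf ij.1 * cHalf ij.2
      = if m ≤ 1 then 1 else 0 := by
  have h := Ring.add_choose_eq (r := (1:ℂ)/2) (s := (1:ℂ)/2) m (Commute.all _ _)
  have h2 : ((1:ℂ)/2) + ((1:ℂ)/2) = ((1:ℕ) : ℂ) := by norm_num
  rw [h2, Ring.choose_natCast] at h
  simp only [cHalf_eq_choose]
  rw [← h]
  rcases Nat.lt_or_ge m 2 with hm | hm
  · interval_cases m <;> simp
  · rw [if_neg (by omega), Nat.choose_eq_zero_of_lt (by omega), Nat.cast_zero]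

lemma cHalf_rec (m : ℕ) : ((m:ℂ) + 1) * cHalf (m + 1) = ((1:ℂ)/2 - m) * cHalf m := by
  have hf : ((m.factorial : ℂ)) ≠ 0 := Nat.cast_ne_zero.mpr m.factorial_ne_zero
  have hm1 : ((m : ℂ) + 1) ≠ 0 := by
    have h := Nat.cast_ne_zero (R := ℂ).mpr (Nat.succ_ne_zero m)
    push_cast at h
    exact h
  have hfs : (((m+1).factorial : ℂ)) = ((m:ℂ) + 1) * m.factorial := by
    rw [Nat.factorial_succ]; push_cast; ring
  rw [cHalf, cHalf, Finset.prod_range_succ, hfs]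
  field_simp

/-- The series `Σ_m cHalf(m) X^{2m}` in `ℂ[[X]]`; the preimage of `s` under `φf`. -/
def gx : PowerSeries ℂ := PowerSeries.mk fun m => if m % 2 = 0 then cHalf (m / 2) else 0

/-- The operator `X·d/dX` on power series. -/
def Dop (f : PowerSeries ℂ) : PowerSeries ℂ :=
  PowerSeries.mk fun n => (n : ℂ) * PowerSeries.coeff n f

lemma coeff_Dop (f : PowerSeries ℂ) (n : ℕ) :
    coeff n (Dop f) = (n : ℂ) * coeff n f := by simp [Dop]

lemma Dop_add (f g : PowerSeries ℂ) : Dop (f + g) = Dop f + Dop g := by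
  ext n; simp [coeff_Dop, mul_add]

lemma Dop_neg (f : PowerSeries ℂ) : Dop (-f) = -(Dop f) := by
  ext n; simp [coeff_Dop]

lemma Dop_X : Dop (PowerSeries.X : PowerSeries ℂ) = PowerSeries.X := by
  ext n
  simp only [coeff_Dop, PowerSeries.coeff_X]
  split_ifs with h
  · subst h; norm_num
  · ring

lemma even_conv (f g : ℕ → ℂ) (n : ℕ) :
    ∑ ij ∈ Finset.HasAntidiagonal.antidiagonal n,
      (if ij.1 % 2 = 0 then f (ij.1 / 2) else 0) * (if ij.2 % 2 = 0 then g (ij.2 / 2) else 0)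
    = if n % 2 = 0 then ∑ ab ∈ Finset.HasAntidiagonal.antidiagonal (n / 2), f ab.1 * g ab.2 else 0 := by
  set F : ℕ × ℕ → ℂ := fun ij =>
    (if ij.1 % 2 = 0 then f (ij.1 / 2) else 0) * (if ij.2 % 2 = 0 then g (ij.2 / 2) else 0) with hF
  rcases Nat.mod_two_eq_zero_or_one n with hn | hn
  · rw [if_pos hn]
    have hsub : (Finset.HasAntidiagonal.antidiagonal (n/2)).image (fun ab : ℕ × ℕ => (2*ab.1, 2*ab.2))
        ⊆ Finset.HasAntidiagonal.antidiagonal n := by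
      intro x hx
      simp only [Finset.mem_image, Finset.HasAntidiagonal.mem_antidiagonal] at hx ⊢
      obtain ⟨ab, hab, rfl⟩ := hx
      omega
    have hzero : ∀ x ∈ Finset.HasAntidiagonal.antidiagonal n,
        x ∉ (Finset.HasAntidiagonal.antidiagonal (n/2)).image (fun ab : ℕ × ℕ => (2*ab.1, 2*ab.2)) → F x = 0 := by
      intro x hx hxn
      simp only [Finset.mem_image, Finset.HasAntidiagonal.mem_antidiagonal] at hx hxn
      rcases Nat.mod_two_eq_zero_or_one x.1 with h1 | h1
      · exact absurd ⟨(x.1/2, x.2/2), by omega, by ext <;> simp <;> omega⟩ hxn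
      · simp only [hF, if_neg (by omega : ¬ x.1 % 2 = 0), zero_mul]
    have hinj : ∀ a ∈ Finset.HasAntidiagonal.antidiagonal (n/2), ∀ b ∈ Finset.HasAntidiagonal.antidiagonal (n/2),
        (fun ab : ℕ × ℕ => (2*ab.1, 2*ab.2)) a = (fun ab : ℕ × ℕ => (2*ab.1, 2*ab.2)) b
          → a = b := by
      intro a _ b _ hab
      simpa [Prod.ext_iff] using hab
    rw [← Finset.sum_subset hsub hzero, Finset.sum_image hinj]
    apply Finset.sum_congr rfl
    intro ab _
    simp only [hF]
    rw [if_pos (by omega), if_pos (by omega)]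
    congr 2 <;> omega
  · rw [if_neg (by omega)]
    apply Finset.sum_eq_zero
    intro x hx
    simp only [Finset.HasAntidiagonal.mem_antidiagonal] at hx
    rcases Nat.mod_two_eq_zero_or_one x.1 with h1 | h1
    · simp only [hF, if_neg (by omega : ¬ x.2 % 2 = 0), mul_zero]
    · simp only [hF, if_neg (by omega : ¬ x.1 % 2 = 0), zero_mul]

lemma G1 : gx * gx = 1 + PowerSeries.X ^ 2 := by
  ext n
  rw [PowerSeries.coeff_mul]
  simp only [gx, PowerSeries.coeff_mk]
  rw [even_conv, cHalf_conv]
  rw [map_add, PowerSeries.coeff_one, PowerSeries.coeff_X_pow]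
  rcases Nat.lt_or_ge n 3 with hn | hn
  · interval_cases n <;> norm_num
  · split_ifs <;> first | rfl | (exfalso; omega) | norm_num

lemma coeff_X2_mul {R : Type*} [Semiring R] (f : PowerSeries R) (n : ℕ) :
    coeff n (PowerSeries.X ^ 2 * f) = if 2 ≤ n then coeff (n - 2) f else 0 := by
  rcases Nat.lt_or_ge n 2 with hn | hn
  · rw [if_neg (by omega), PowerSeries.coeff_mul]
    apply Finset.sum_eq_zero
    intro x hx
    rw [Finset.HasAntidiagonal.mem_antidiagonal] at hx
    rw [PowerSeries.coeff_X_pow, if_neg (by omega), zero_mul]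
  · obtain ⟨k, rfl⟩ : ∃ k, n = k + 2 := ⟨n - 2, by omega⟩
    rw [if_pos (by omega), pow_two, mul_assoc,
      show k + 2 = (k + 1) + 1 from rfl, PowerSeries.coeff_succ_X_mul,
      PowerSeries.coeff_succ_X_mul]
    congr 1

lemma G2 : (1 + PowerSeries.X ^ 2) * Dop gx = PowerSeries.X ^ 2 * gx := by
  ext n
  rw [add_mul, one_mul, map_add, coeff_X2_mul, coeff_X2_mul]
  simp only [Dop, gx, PowerSeries.coeff_mk]
  rcases Nat.mod_two_eq_zero_or_one n with hn | hn
  · rcases Nat.lt_or_ge n 2 with h2 | h2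
    · interval_cases n <;> norm_num
    · simp only [if_pos hn, if_pos h2, if_pos (show (n-2) % 2 = 0 by omega)]
      obtain ⟨m, rfl⟩ : ∃ m, n = 2 * m + 2 := ⟨(n-2)/2, by omega⟩
      rw [show (2*m+2)/2 = m + 1 by omega, show (2*m+2-2 : ℕ) = 2*m by omega,
        show (2*m)/2 = m by omega]
      have h := cHalf_rec m
      push_cast
      linear_combination 2 * h
  · have h1 : ¬ n % 2 = 0 := by omega
    simp only [if_neg h1]
    split_ifs with h h2 <;> first | (exfalso; omega) | ring

/-- The two key `ℂ[[X]]`-level identities, packaged. -/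
lemma main_identity_1 :
    -((1 + PowerSeries.X ^ 2) * Dop (PowerSeries.X + gx))
      = -(((1:ℂ)/4) • ((PowerSeries.X + gx) ^ 3 - (-PowerSeries.X + gx))) := by
  rw [Dop_add, Dop_X, smul_eq_C_mul]
  have hG1 := G1
  have hG2 := G2
  have hC4 : (PowerSeries.C ((1:ℂ)/4)) * 4 = 1 := by
    rw [show ((4:ℂ⟦X⟧)) = PowerSeries.C 4 from by rw [map_ofNat], ← map_mul]
    norm_num
  linear_combination (PowerSeries.C (1/4) * (3 * PowerSeries.X + gx)) * hG1 - hG2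
      + (PowerSeries.X + PowerSeries.X^3 - PowerSeries.X^2 * Dop gx - Dop gx
          + 2 * PowerSeries.X^2 * gx) * hC4
      + (PowerSeries.X^2 * Dop gx + Dop gx - PowerSeries.X^2 * gx) * hC4

lemma main_identity_2 :
    -((1 + PowerSeries.X ^ 2) * Dop (-PowerSeries.X + gx))
      = -(((1:ℂ)/4) • ((-PowerSeries.X + gx) ^ 3 - (PowerSeries.X + gx))) := by
  rw [Dop_add, Dop_neg, Dop_X, smul_eq_C_mul]
  have hG1 := G1
  have hG2 := G2
  have hC4 : (PowerSeries.C ((1:ℂ)/4)) * 4 = 1 := by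
    rw [show ((4:ℂ⟦X⟧)) = PowerSeries.C 4 from by rw [map_ofNat], ← map_mul]
    norm_num
  linear_combination (PowerSeries.C (1/4) * (-3 * PowerSeries.X + gx)) * hG1 - hG2
      + (-PowerSeries.X - PowerSeries.X^3 - PowerSeries.X^2 * Dop gx - Dop gx
          - 2 * PowerSeries.X^2 * gx) * hC4
      + (PowerSeries.X^2 * Dop gx + Dop gx + 3 * PowerSeries.X^2 * gx) * hC4

end ComplexSeries


/-! ### U-level commutation lemmas -/

-- U-level relations
lemma urel (i j k l : Fin 3) :
    e i j * e k l - ((-1 : ℂ) ^ (par i j * par k l)) • (e k l * e i j)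
      = (if j = k then e i l else 0)
        - ((-1 : ℂ) ^ (par i j * par k l)) • (if l = i then e k j else 0) := by
  have h := RingQuot.mkAlgHom_rel ℂ (Rel.mk i j k l)
  simpa [e, map_sub, map_smul, map_mul, apply_ite (RingQuot.mkAlgHom ℂ Rel)] using h

lemma h1_e1 : h₁ * e₁ = e₁ * h₁ + (2:ℂ) • e₁ := by
  have h00 := urel 0 0 0 1
  have h11 := urel 1 1 0 1
  simp [par, e₁] at h00 h11
  unfold h₁ e₁
  have h00' := sub_eq_iff_eq_add.mp h00
  have h11' := sub_eq_iff_eq_add.mp h11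
  rw [sub_mul, h00', h11', mul_sub]
  module

lemma h2_e1 : h₂ * e₁ = e₁ * h₂ - e₁ := by
  have h11 := urel 1 1 0 1
  have h22 := urel 2 2 0 1
  simp [par, e₁] at h11 h22
  unfold h₂ e₁
  have h11' := sub_eq_iff_eq_add.mp h11
  have h22' := sub_eq_zero.mp h22
  rw [add_mul, h11', h22', mul_add]
  module

lemma h1_e1_pow (n : ℕ) : h₁ * e₁ ^ n = e₁ ^ n * h₁ + ((2 * n : ℂ)) • e₁ ^ n := by
  induction n with
  | zero => simp
  | succ n ih =>
    rw [pow_succ, ← mul_assoc, ih, add_mul, smul_mul_assoc, mul_assoc, h1_e1, mul_add,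
      ← mul_assoc, ← pow_succ, mul_smul_comm, ← pow_succ]
    push_cast
    module

lemma h2_e1_pow (n : ℕ) : h₂ * e₁ ^ n = e₁ ^ n * h₂ - ((n : ℂ)) • e₁ ^ n := by
  induction n with
  | zero => simp
  | succ n ih =>
    rw [pow_succ, ← mul_assoc, ih, sub_mul, smul_mul_assoc, mul_assoc, h2_e1, mul_sub,
      ← mul_assoc, ← pow_succ]
    push_cast
    module

lemma e1sq_h1_pow (n : ℕ) :
    (e₁ ^ 2 * h₁) * e₁ ^ n = e₁ ^ n * (e₁ ^ 2 * h₁) + ((2 * n : ℂ)) • e₁ ^ (n + 2) := by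
  rw [mul_assoc, h1_e1_pow, mul_add, mul_smul_comm]
  simp only [← mul_assoc, ← pow_add]
  rw [show 2 + n = n + 2 by omega]


lemma h3_e1_pow (n : ℕ) : h₃ * e₁ ^ n = e₁ ^ n * h₃ + ((n : ℂ)) • e₁ ^ n := by
  unfold h₃
  rw [add_mul, h1_e1_pow, h2_e1_pow, mul_add]
  module

lemma h23_pow (n : ℕ) : (h₂ + h₃) * e₁ ^ n = e₁ ^ n * (h₂ + h₃) := by
  rw [add_mul, h2_e1_pow, h3_e1_pow, mul_add]
  module

/-! ### The embedding of `ℂ[[X]]` as series in `t·e₁` -/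

/-- `φf f = Σ_n f_n • e₁^n t^n`. -/
def φf (f : PowerSeries ℂ) : V :=
  PowerSeries.mk fun n => (PowerSeries.coeff n f) • e₁ ^ n

lemma coeff_φf (f : PowerSeries ℂ) (n : ℕ) :
    PowerSeries.coeff n (φf f) = (PowerSeries.coeff n f) • e₁ ^ n := by
  simp [φf]

lemma φf_add (f g : PowerSeries ℂ) : φf (f + g) = φf f + φf g := by
  ext n; simp [coeff_φf, add_smul]

lemma φf_neg (f : PowerSeries ℂ) : φf (-f) = -(φf f) := by
  ext n; simp only [coeff_φf, map_neg]; module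

lemma φf_sub (f g : PowerSeries ℂ) : φf (f - g) = φf f - φf g := by
  ext n; simp only [coeff_φf, map_sub]; module

lemma φf_smul (c : ℂ) (f : PowerSeries ℂ) : φf (c • f) = c • φf f := by
  ext n; simp [coeff_φf, smul_smul]

lemma φf_mul (f g : PowerSeries ℂ) : φf (f * g) = φf f * φf g := by
  ext n
  rw [coeff_φf, PowerSeries.coeff_mul, PowerSeries.coeff_mul, Finset.sum_smul]
  apply Finset.sum_congr rfl
  intro x hx
  rw [Finset.HasAntidiagonal.mem_antidiagonal] at hx
  rw [coeff_φf, coeff_φf, smul_mul_smul_comm, ← pow_add, hx]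

lemma φf_comm (f g : PowerSeries ℂ) : φf f * φf g = φf g * φf f := by
  rw [← φf_mul, ← φf_mul, mul_comm]

lemma φf_pow3 (f : PowerSeries ℂ) : φf (f ^ 3) = (φf f) ^ 3 := by
  rw [pow_succ, pow_two, φf_mul, φf_mul, pow_succ, pow_two]

/-- `X` is central in `U[[t]]`. -/
lemma tv_comm (v : V) : tv * v = v * tv := by
  ext n
  cases n with
  | zero =>
    simp [tv, PowerSeries.coeff_zero_eq_constantCoeff, map_mul]
  | succ n =>
    rw [tv, PowerSeries.coeff_succ_X_mul, PowerSeries.coeff_succ_mul_X]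

lemma s_eq : s = φf gx := by
  ext n
  rw [coeff_φf]
  simp only [s, gx, PowerSeries.coeff_mk]
  split_ifs <;> simp

lemma x_eq : tv * C e₁ = φf PowerSeries.X := by
  ext n
  rw [coeff_φf]
  cases n with
  | zero => simp [tv, C, PowerSeries.coeff_zero_eq_constantCoeff, map_mul]
  | succ n =>
    rw [tv, PowerSeries.coeff_succ_X_mul, C, PowerSeries.coeff_C, PowerSeries.coeff_X]
    split_ifs with h h2 <;> simp_all

lemma T_eq : T = φf (PowerSeries.X + gx) := by
  rw [T, φf_add, s_eq, x_eq]

lemma T'_eq : T' = φf (-PowerSeries.X + gx) := by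
  rw [T', φf_add, s_eq, φf_neg, x_eq]

/-! ### Commutators of the constants with `φf` -/

lemma K1 (f : PowerSeries ℂ) : C h₂ * φf f = φf f * C h₂ - φf (Dop f) := by
  simp only [C]
  ext n
  rw [map_sub, PowerSeries.coeff_C_mul, PowerSeries.coeff_mul_C, coeff_φf, coeff_φf, coeff_Dop,
    mul_smul_comm, h2_e1_pow, smul_sub, smul_smul, smul_mul_assoc, mul_comm ((n:ℂ))]

lemma K0 (f : PowerSeries ℂ) : C (h₂ + h₃) * φf f = φf f * C (h₂ + h₃) := by
  simp only [C]
  ext n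
  rw [PowerSeries.coeff_C_mul, PowerSeries.coeff_mul_C, coeff_φf,
    mul_smul_comm, smul_mul_assoc, h23_pow]

lemma K2 (f : PowerSeries ℂ) :
    C (e₁ ^ 2 * h₁) * φf f
      = φf f * C (e₁ ^ 2 * h₁) + (2:ℂ) • (C (e₁ ^ 2) * φf (Dop f)) := by
  simp only [C]
  ext n
  rw [map_add, PowerSeries.coeff_C_mul, PowerSeries.coeff_mul_C, coeff_φf,
    PowerSeries.coeff_smul, PowerSeries.coeff_C_mul, coeff_φf, coeff_Dop,
    mul_smul_comm, smul_mul_assoc, e1sq_h1_pow]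
  rw [smul_add, smul_smul, mul_smul_comm, smul_smul]
  congr 2
  · ring
  · rw [← pow_add, show 2 + n = n + 2 by omega]

lemma K4 (g : PowerSeries ℂ) :
    tv ^ 2 * (C (e₁ ^ 2) * φf g) = φf (PowerSeries.X ^ 2 * g) := by
  simp only [C]
  ext n
  rw [tv, coeff_X2_mul, coeff_φf, coeff_X2_mul]
  split_ifs with h
  · rw [PowerSeries.coeff_C_mul, coeff_φf, mul_smul_comm, ← pow_add,
      show 2 + (n - 2) = n by omega]
  · rw [zero_smul]

/-! ### The main commutator computations -/

lemma tv2_comm (v : V) : tv ^ 2 * v = v * tv ^ 2 := by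
  rw [pow_two, mul_assoc, tv_comm v, ← mul_assoc, tv_comm v, mul_assoc]

lemma brH2 (f : PowerSeries ℂ) :
    br H₂ (φf f) = -φf ((1 + PowerSeries.X ^ 2) * Dop f) := by
  have step2 : (tv ^ 2 * C (e₁ ^ 2 * h₁)) * φf f - φf f * (tv ^ 2 * C (e₁ ^ 2 * h₁))
      = (2:ℂ) • φf (PowerSeries.X ^ 2 * Dop f) := by
    have hc : φf f * (tv ^ 2 * C (e₁ ^ 2 * h₁)) = tv ^ 2 * (φf f * C (e₁ ^ 2 * h₁)) := by
      rw [← mul_assoc, ← tv2_comm, mul_assoc]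
    rw [hc, mul_assoc, ← mul_sub, K2, add_sub_cancel_left, mul_smul_comm, K4]
  rw [br, H₂]
  rw [sub_mul, mul_sub, K1]
  rw [smul_mul_assoc, mul_smul_comm]
  rw [sub_sub_sub_comm, sub_sub_cancel_left, ← smul_sub, step2, smul_smul]
  rw [add_mul, one_mul, φf_add]
  have h12 : ((1:ℂ)/2) * 2 = 1 := by norm_num
  rw [h12, one_smul]
  abel

lemma brH3 (f : PowerSeries ℂ) :
    br H₃ (φf f) = φf ((1 + PowerSeries.X ^ 2) * Dop f) := by
  have hsum : H₂ + H₃ = C (h₂ + h₃) := by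
    rw [H₂, H₃, map_add]
    abel
  have hH3 : H₃ = C (h₂ + h₃) - H₂ := by rw [← hsum]; abel
  have h2 := brH2 f
  rw [br] at h2
  have key : H₃ * φf f - φf f * H₃ = -(H₂ * φf f - φf f * H₂) := by
    rw [hH3, sub_mul, mul_sub, K0]
    abel
  rw [br, key, h2, neg_neg]

/-- the commutators of `H₂`, `H₃` with `T`, `T'` in `U(gl(2|1))[[t]]`. -/
theorem statement4 :
    br H₂ T = -(((1 : ℂ) / 4) • (T ^ 3 - T')) ∧
    br H₂ T' = -(((1 : ℂ) / 4) • (T' ^ 3 - T)) ∧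
    br H₃ T = ((1 : ℂ) / 4) • (T ^ 3 - T') ∧
    br H₃ T' = ((1 : ℂ) / 4) • (T' ^ 3 - T) := by
  have hT3 : T ^ 3 - T' = φf ((PowerSeries.X + gx) ^ 3 - (-PowerSeries.X + gx)) := by
    rw [φf_sub, φf_pow3, ← T_eq, ← T'_eq]
  have hT'3 : T' ^ 3 - T = φf ((-PowerSeries.X + gx) ^ 3 - (PowerSeries.X + gx)) := by
    rw [φf_sub, φf_pow3, ← T_eq, ← T'_eq]
  have m1 := main_identity_1
  have m2 := main_identity_2
  have m1' := neg_injective m1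
  have m2' := neg_injective m2
  refine ⟨?_, ?_, ?_, ?_⟩
  · rw [T_eq, brH2, ← φf_neg, m1, φf_neg, φf_smul, φf_sub, φf_pow3, ← T_eq, ← T'_eq]
  · rw [T'_eq, brH2, ← φf_neg, m2, φf_neg, φf_smul, φf_sub, φf_pow3, ← T_eq, ← T'_eq]
  · rw [T_eq, brH3, m1', φf_smul, φf_sub, φf_pow3, ← T_eq, ← T'_eq]
  · rw [T'_eq, brH3, m2', φf_smul, φf_sub, φf_pow3, ← T_eq, ← T'_eq]

end SuperJordanian
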